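/- (Theorem 3.1, spectral form) If R₀₁ < 1 and R₀₂ < 1, then every complex eigenvalue τ of the Jacobian J₀ at the disease-free equilibrium satisfies Re(τ) < 0. -/

import Mathlib

open Matrix

/-- Roots of a quadratic with positive real coefficients have negative real part. -/
lemma quad_root_re_neg (c d : ℝ) (hc : 0 < c) (hd : 0 < d) (τ : ℂ)
    (h : τ ^ 2 + (c : ℂ) * τ + (d : ℂ) = 0) : τ.re < 0 := by
  by_contra hx
  push_neg at hx
  rw [Complex.ext_iff] at h
  obtain ⟨h1, h2⟩ := h
  simp [pow_two, Complex.mul_re, Complex.mul_im, Complex.add_re, Complex.add_im] at h1 h2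
  set x := τ.re; set y := τ.im
  have hy : y * (2 * x + c) = 0 := by linarith
  have h2xc : 0 < 2 * x + c := by linarith
  have hy0 : y = 0 := by
    rcases mul_eq_zero.mp hy with h | h
    · exact h
    · linarith
  rw [hy0] at h1
  nlinarith

set_option maxHeartbeats 2000000 in
/-- Determinant of the (block/lower triangular patterned) 5×5 characteristic matrix. -/
lemma det5_factor (τ a00 a01 a02 a03 a04 a10 a11 a12 a13 a22 a32 a33 a42 a43 a44 : ℂ) :
    (!![τ - a00, -a01, -a02, -a03, -a04;
        -a10, τ - a11, -a12, -a13, 0;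
        0, 0, τ - a22, 0, 0;
        0, 0, -a32, τ - a33, 0;
        0, 0, -a42, -a43, τ - a44] : Matrix (Fin 5) (Fin 5) ℂ).det
    = ((τ - a00) * (τ - a11) - a01 * a10) * (τ - a22) * (τ - a33) * (τ - a44) := by
  simp [Matrix.det_succ_column_zero, Fin.sum_univ_succ, Matrix.det_fin_three,
    Fin.succAbove, Matrix.vecHead, Matrix.vecTail]
  ring

set_option maxRecDepth 16000 in
set_option maxHeartbeats 4000000 in
/-- Theorem 3.1 (spectral form): if R₀₁ < 1 and R₀₂ < 1 then every complex
eigenvalue τ of the Jacobian J₀ at the disease-free equilibrium satisfies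
Re(τ) < 0. -/
theorem dfe_locally_asymptotically_stable
    (B ω β₁ β₂ α μ δ σ ω₁ ω₂ m r₁ r₂ : ℝ)
    (hB : 0 < B) (hω : 0 < ω) (hβ₁ : 0 < β₁) (hβ₂ : 0 < β₂) (hα : 0 < α)
    (hμ : 0 < μ) (hδ : 0 < δ) (hσ : σ ∈ Set.Ioo (0 : ℝ) 1)
    (hω₁ : 0 < ω₁) (hω₂ : 0 < ω₂) (hm : 0 < m) (hr₁ : 0 < r₁) (hr₂ : 0 < r₂)
    (S₀ V₀ R₀₁ R₀₂ : ℝ)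
    (hS₀ : S₀ = B * (μ + ω) / (ω * (μ + ω + α)))
    (hV₀ : V₀ = α * B / (ω * (μ + ω + α)))
    (hR₀₁ : R₀₁ = β₁ * (B * (μ + ω) + (1 - σ) * α * B) /
      ((ω + ω₁ + m + r₁) * ω * (μ + ω + α)))
    (hR₀₂ : R₀₂ = β₂ * (B * (μ + ω) + (1 - σ) * α * B) /
      ((ω + ω₂ + r₂) * ω * (μ + ω + α)))
    (hlt₁ : R₀₁ < 1) (hlt₂ : R₀₂ < 1)
    (J₀ : Matrix (Fin 5) (Fin 5) ℝ)
    (hJ₀ : J₀ =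
      !![-ω - α, μ, -β₁ * S₀, -β₂ * S₀, δ;
         α, -ω - μ, -(1 - σ) * β₁ * V₀, -(1 - σ) * β₂ * V₀, 0;
         0, 0, -(ω + ω₁ + m + r₁) + β₁ * (S₀ + (1 - σ) * V₀), 0, 0;
         0, 0, m, -(ω + ω₂ + r₂) + β₂ * (S₀ + (1 - σ) * V₀), 0;
         0, 0, r₁, r₂, -ω - δ]) :
    ∀ τ : ℂ, τ ∈ spectrum ℂ (J₀.map (Complex.ofReal ·)) → τ.re < 0 := by
  intro τ hτ
  obtain ⟨hσ0, hσ1⟩ := hσ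
  -- positive denominators
  have hden : 0 < ω * (μ + ω + α) := by positivity
  -- the combined susceptible mass
  have hSV : S₀ + (1 - σ) * V₀ = (B * (μ + ω) + (1 - σ) * α * B) / (ω * (μ + ω + α)) := by
    rw [hS₀, hV₀]; field_simp
  -- diagonal entries of the lower-triangular block are negative
  have ha : β₁ * (S₀ + (1 - σ) * V₀) - (ω + ω₁ + m + r₁) < 0 := by
    rw [hSV]
    rw [hR₀₁, div_lt_one (by positivity)] at hlt₁
    have h' : β₁ * ((B * (μ + ω) + (1 - σ) * α * B) / (ω * (μ + ω + α)))
        < ω + ω₁ + m + r₁ := by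
      rw [mul_div_assoc' , div_lt_iff₀ hden]
      nlinarith [hlt₁]
    linarith
  have hb : β₂ * (S₀ + (1 - σ) * V₀) - (ω + ω₂ + r₂) < 0 := by
    rw [hSV]
    rw [hR₀₂, div_lt_one (by positivity)] at hlt₂
    have h' : β₂ * ((B * (μ + ω) + (1 - σ) * α * B) / (ω * (μ + ω + α)))
        < ω + ω₂ + r₂ := by
      rw [mul_div_assoc', div_lt_iff₀ hden]
      nlinarith [hlt₂]
    linarith
  -- the determinant of the characteristic matrix vanishes
  rw [spectrum.mem_iff] at hτ
  have hdet : (algebraMap ℂ (Matrix (Fin 5) (Fin 5) ℂ) τ - J₀.map (Complex.ofReal ·)).det = 0 := by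
    by_contra h
    exact hτ ((Matrix.isUnit_iff_isUnit_det _).mpr (isUnit_iff_ne_zero.mpr h))
  -- rewrite the characteristic matrix explicitly
  have hN : algebraMap ℂ (Matrix (Fin 5) (Fin 5) ℂ) τ - J₀.map (Complex.ofReal ·) =
      !![τ - ((-ω - α : ℝ) : ℂ), -((μ : ℝ) : ℂ), -((-β₁ * S₀ : ℝ) : ℂ),
           -((-β₂ * S₀ : ℝ) : ℂ), -((δ : ℝ) : ℂ);
         -((α : ℝ) : ℂ), τ - ((-ω - μ : ℝ) : ℂ), -((-(1 - σ) * β₁ * V₀ : ℝ) : ℂ),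
           -((-(1 - σ) * β₂ * V₀ : ℝ) : ℂ), 0;
         0, 0, τ - ((-(ω + ω₁ + m + r₁) + β₁ * (S₀ + (1 - σ) * V₀) : ℝ) : ℂ), 0, 0;
         0, 0, -((m : ℝ) : ℂ),
           τ - ((-(ω + ω₂ + r₂) + β₂ * (S₀ + (1 - σ) * V₀) : ℝ) : ℂ), 0;
         0, 0, -((r₁ : ℝ) : ℂ), -((r₂ : ℝ) : ℂ), τ - ((-ω - δ : ℝ) : ℂ)] := by
    subst hJ₀
    ext i j
    fin_cases i <;> fin_cases j <;>
      simp [Matrix.algebraMap_matrix_apply, Matrix.map_apply, Matrix.sub_apply,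
        Matrix.vecHead, Matrix.vecTail]
  rw [hN, det5_factor] at hdet
  -- case analysis on the vanishing factor
  rcases mul_eq_zero.mp hdet with hdet | h5
  · rcases mul_eq_zero.mp hdet with hdet | h4
    · rcases mul_eq_zero.mp hdet with h2 | h3
      · -- quadratic factor
        have hq : τ ^ 2 + ((2 * ω + α + μ : ℝ) : ℂ) * τ + ((ω * (ω + μ + α) : ℝ) : ℂ) = 0 := by
          rw [← h2]; push_cast; ring
        exact quad_root_re_neg _ _ (by positivity) (by positivity) τ hq
      · -- τ = a₂₂ < 0
        have : τ = ((-(ω + ω₁ + m + r₁) + β₁ * (S₀ + (1 - σ) * V₀) : ℝ) : ℂ) :=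
          sub_eq_zero.mp h3
        rw [this, Complex.ofReal_re]
        linarith
    · have : τ = ((-(ω + ω₂ + r₂) + β₂ * (S₀ + (1 - σ) * V₀) : ℝ) : ℂ) :=
        sub_eq_zero.mp h4
      rw [this, Complex.ofReal_re]
      linarith
  · have : τ = ((-ω - δ : ℝ) : ℂ) := sub_eq_zero.mp h5
    rw [this, Complex.ofReal_re]
    linarith
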